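/- arXiv:2509.23397 — 3 statements merged into one kernel-verified Lean document; each statement's English description precedes it below -/
import Mathlib

section
/- The basic reproduction number R0(α) = sqrt( (βH·βM·(NM/NH)·α) / (k·μ·((1 + bρ/μ)·(L/NH) + α)^2) ), viewed as a function of α ∈ (0,1], attains its unique maximum at α* = (1 + bρ/μ)·(L/NH), provided all parameters βH, βM, NM, NH, k, μ, b, ρ, L are positive and α* ≤ 1; i.e., R0 is strictly increasing on (0, α*) and strictly decreasing on (α*, 1]. -/
lemma aux_key (P Q s x y : ℝ) (hP : 0 < P) (hQ : 0 < Q) (hs : 0 < s)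
    (hx : 0 < x) (hy : 0 < y) (hxy : x < y) (hprod : x * y < s ^ 2) :
    (P * x) / (Q * (s + x) ^ 2) < (P * y) / (Q * (s + y) ^ 2) := by
  have hdx : 0 < Q * (s + x) ^ 2 := by positivity
  have hdy : 0 < Q * (s + y) ^ 2 := by positivity
  rw [div_lt_div_iff₀ hdx hdy]
  nlinarith [mul_pos (mul_pos hP hQ) (mul_pos (sub_pos.2 hxy) (sub_pos.2 hprod))]

lemma aux_key' (P Q s x y : ℝ) (hP : 0 < P) (hQ : 0 < Q) (hs : 0 < s)
    (hx : 0 < x) (hy : 0 < y) (hxy : x < y) (hprod : s ^ 2 < x * y) :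
    (P * y) / (Q * (s + y) ^ 2) < (P * x) / (Q * (s + x) ^ 2) := by
  have hdx : 0 < Q * (s + x) ^ 2 := by positivity
  have hdy : 0 < Q * (s + y) ^ 2 := by positivity
  rw [div_lt_div_iff₀ hdy hdx]
  nlinarith [mul_pos (mul_pos hP hQ) (mul_pos (sub_pos.2 hxy) (sub_pos.2 hprod))]

/-- The basic reproduction number `R0(α)` attains its unique maximum at
`α* = (1 + bρ/μ)·(L/NH)`: it is strictly increasing on `(0, α*)` and
strictly decreasing on `(α*, 1]`. -/
theorem stmt0 (βH βM NM NH k μ b ρ L : ℝ)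
    (hβH : 0 < βH) (hβM : 0 < βM) (hNM : 0 < NM) (hNH : 0 < NH)
    (hk : 0 < k) (hμ : 0 < μ) (hb : 0 < b) (hρ : 0 < ρ) (hL : 0 < L)
    (R0 : ℝ → ℝ)
    (hR0 : ∀ α, R0 α =
      Real.sqrt ((βH * βM * (NM / NH) * α) /
        (k * μ * ((1 + b * ρ / μ) * (L / NH) + α) ^ 2)))
    (αstar : ℝ) (hαstar : αstar = (1 + b * ρ / μ) * (L / NH))
    (hα1 : αstar ≤ 1) :
    StrictMonoOn R0 (Set.Ioo 0 αstar) ∧ StrictAntiOn R0 (Set.Ioc αstar 1) := by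
  have hP : 0 < βH * βM * (NM / NH) := by positivity
  have hQ : 0 < k * μ := by positivity
  have hs : 0 < αstar := by rw [hαstar]; positivity
  have hR0' : ∀ α, R0 α =
      Real.sqrt ((βH * βM * (NM / NH) * α) / (k * μ * (αstar + α) ^ 2)) := by
    intro α; rw [hR0, hαstar]
  constructor
  · intro x hx y hy hxy
    rw [hR0' x, hR0' y]
    have hx0 : 0 < x := hx.1
    apply Real.sqrt_lt_sqrt
    · positivity
    · exact aux_key _ _ _ _ _ hP hQ hs hx.1 hy.1
        hxy (by nlinarith [hx.2, hy.2, hx.1, hy.1])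
  · intro x hx y hy hxy
    rw [hR0' x, hR0' y]
    have hy0 : 0 < y := lt_trans hs hy.1
    have hx0 : 0 < x := lt_trans hs hx.1
    apply Real.sqrt_lt_sqrt
    · positivity
    · exact aux_key' _ _ _ _ _ hP hQ hs hx0 hy0
        hxy (by nlinarith [hx.1, hy.1])
end

section
/- Let A0 = L + α·NH with NH > 0, α ∈ (0,1], L ≥ 0, μ > 0, b > 0, ρ ≥ 0. Then the inequality α·(2μA0 + bρL)/(A0·(μA0 + bρL)) > 1/NH holds if and only if L/NH < α·sqrt(μ/(μ + bρ)). -/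
/-- The rational inequality in the backward-bifurcation criterion is
equivalent to the explicit threshold `L/NH < α·√(μ/(μ+bρ))`. -/
theorem stmt5 (α μ b ρ L NH : ℝ)
    (hNH : 0 < NH) (hα : 0 < α) (hα1 : α ≤ 1) (hμ : 0 < μ) (hb : 0 < b)
    (hρ : 0 ≤ ρ) (hL : 0 ≤ L)
    (A0 : ℝ) (hA0 : A0 = L + α * NH) :
    (α * (2 * μ * A0 + b * ρ * L) / (A0 * (μ * A0 + b * ρ * L)) > 1 / NH)
      ↔ L / NH < α * Real.sqrt (μ / (μ + b * ρ)) := by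
  subst hA0
  have hμbρ : 0 < μ + b * ρ := by positivity
  have hden : 0 < (L + α * NH) * (μ * (L + α * NH) + b * ρ * L) := by positivity
  rw [gt_iff_lt, div_lt_div_iff₀ hNH hden]
  have h1 : (L / NH < α * Real.sqrt (μ / (μ + b * ρ))) ↔
      L / (NH * α) < Real.sqrt (μ / (μ + b * ρ)) := by
    rw [← div_div, div_lt_iff₀ hα, mul_comm]
  rw [h1, Real.lt_sqrt (by positivity), div_pow, div_lt_div_iff₀ (by positivity) hμbρ]
  constructor <;> intro h <;> nlinarith [sq_nonneg L, sq_nonneg (α*NH), mul_pos hNH hα]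
end

section
/- For the 3×3 matrix J = [[−d−Q−δ, P−δ, S],[Q, −P−γ−d, −S],[0, −N, −U]] with d, γ, δ > 0 and P, Q, S, N, U > 0 satisfying (γ+d)U − NS = (γ+d)·μ·c for some μ, c > 0, the Routh–Hurwitz conditions hold, and therefore every eigenvalue of J has strictly negative real part. -/
open Matrix

/-- Routh–Hurwitz for a cubic: if `a1 > 0`, `a3 > 0` and `a1 * a2 > a3`, then
every complex root of `λ³ + a1 λ² + a2 λ + a3` has negative real part. -/
lemma rh_cubic (a1 a2 a3 : ℝ) (h1 : 0 < a1) (h3 : 0 < a3) (h12 : a3 < a1 * a2)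
    (z : ℂ) (hz : z ^ 3 + (a1 : ℂ) * z ^ 2 + (a2 : ℂ) * z + (a3 : ℂ) = 0) : z.re < 0 := by
  have h2 : 0 < a2 := by nlinarith
  obtain ⟨x, y⟩ := z
  simp only [Complex.ext_iff, pow_succ, pow_zero, one_mul, Complex.mul_re, Complex.mul_im,
    Complex.add_re, Complex.add_im, Complex.ofReal_re, Complex.ofReal_im, Complex.zero_re,
    Complex.zero_im] at hz
  obtain ⟨hre, him⟩ := hz
  show x < 0
  by_contra hx
  push_neg at hx
  rcases eq_or_ne y 0 with hy | hy
  · subst hy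
    nlinarith [sq_nonneg x, mul_nonneg hx (sq_nonneg x)]
  · have hy2 : y ^ 2 = 3 * x ^ 2 + 2 * a1 * x + a2 := by
      have : y * (3 * x ^ 2 - y ^ 2 + 2 * a1 * x + a2) = 0 := by ring_nf; ring_nf at him; linarith
      rcases mul_eq_zero.mp this with h | h
      · exact absurd h hy
      · linarith
    have key : 8 * x ^ 3 + 8 * a1 * x ^ 2 + 2 * (a2 + a1 ^ 2) * x + (a1 * a2 - a3) = 0 := by
      nlinarith [hre, hy2]
    nlinarith [mul_nonneg hx (sq_nonneg x), sq_nonneg x, mul_nonneg hx (mul_nonneg hx hx)]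

/-- For the Jacobian `J` of the reduced mosquito-borne model at the endemic
equilibrium, every eigenvalue has strictly negative real part. -/
theorem stmt9 (d γ δ μ c P Q S N U : ℝ)
    (hd : 0 < d) (hγ : 0 < γ) (hδ : 0 < δ) (hμ : 0 < μ) (hc : 0 < c)
    (hP : 0 < P) (hQ : 0 < Q) (hS : 0 < S) (hN : 0 < N) (hU : 0 < U)
    (hid : (γ + d) * U - N * S = (γ + d) * μ * c)
    (J : Matrix (Fin 3) (Fin 3) ℝ)
    (hJ : J = !![-d - Q - δ, P - δ, S;
                 Q, -P - γ - d, -S;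
                 0, -N, -U]) :
    ∀ z : ℂ, (J.map (fun x : ℝ => (x : ℂ))).charpoly.IsRoot z → z.re < 0 := by
  intro z hz
  have hSN : S * N = (γ + d) * U - (γ + d) * μ * c := by linear_combination -hid
  rw [Polynomial.IsRoot, Matrix.charpoly, ← Polynomial.coe_evalRingHom, RingHom.map_det,
    Matrix.det_fin_three] at hz
  simp [charmatrix_apply, hJ, Matrix.diagonal] at hz
  have E : z ^ 3 + (((d + Q + δ) + (P + γ + d) + U : ℝ) : ℂ) * z ^ 2
      + (((d + Q + δ) * (P + γ + d) - (P - δ) * Q + (d + Q + δ) * U + (P + γ + d) * U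
          - S * N : ℝ) : ℂ) * z
      + (((d + Q + δ) * (P + γ + d) * U - (d + Q + δ) * S * N - (P - δ) * Q * U
          + S * Q * N : ℝ) : ℂ) = 0 := by
    push_cast
    linear_combination hz
  refine rh_cubic _ _ _ ?_ ?_ ?_ z E
  · positivity
  · have h : (d + Q + δ) * (P + γ + d) * U - (d + Q + δ) * S * N - (P - δ) * Q * U + S * Q * N
        = δ*Q*U + δ*P*U + γ*Q*U + γ*δ*μ*c + d*Q*U + d*P*U + d*δ*μ*c + d*γ*μ*c + d^2*μ*c := by
      linear_combination (-δ - d) * hSN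
    rw [h]; positivity
  · have h : ((d + Q + δ) + (P + γ + d) + U)
        * ((d + Q + δ) * (P + γ + d) - (P - δ) * Q + (d + Q + δ) * U + (P + γ + d) * U - S * N)
        - ((d + Q + δ) * (P + γ + d) * U - (d + Q + δ) * S * N - (P - δ) * Q * U + S * Q * N)
        = Q*U^2 + Q^2*U + P*U^2 + 2*P*Q*U + P^2*U + δ*U^2 + 2*δ*Q*U + δ*Q^2 + 2*δ*P*U
          + 2*δ*P*Q + δ*P^2 + δ^2*U + δ^2*Q + δ^2*P + γ*Q*U + γ*Q^2 + γ*P*U + γ*P*Q + γ*μ*c*U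
          + γ*μ*c*Q + γ*μ*c*P + 2*γ*δ*U + 3*γ*δ*Q + 2*γ*δ*P + γ*δ^2 + γ^2*Q + γ^2*μ*c + γ^2*δ
          + d*U^2 + 3*d*Q*U + d*Q^2 + 3*d*P*U + 2*d*P*Q + d*P^2 + d*μ*c*U + d*μ*c*Q + d*μ*c*P
          + 4*d*δ*U + 4*d*δ*Q + 4*d*δ*P + d*δ^2 + 2*d*γ*U + 4*d*γ*Q + 2*d*γ*P + 2*d*γ*μ*c
          + 4*d*γ*δ + d*γ^2 + 3*d^2*U + 3*d^2*Q + 3*d^2*P + d^2*μ*c + 3*d^2*δ + 3*d^2*γ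
          + 2*d^3 := by
      linear_combination (-U - Q - P - γ - d) * hSN
    have hpos : (0:ℝ) < Q*U^2 + Q^2*U + P*U^2 + 2*P*Q*U + P^2*U + δ*U^2 + 2*δ*Q*U + δ*Q^2
        + 2*δ*P*U + 2*δ*P*Q + δ*P^2 + δ^2*U + δ^2*Q + δ^2*P + γ*Q*U + γ*Q^2 + γ*P*U + γ*P*Q
        + γ*μ*c*U + γ*μ*c*Q + γ*μ*c*P + 2*γ*δ*U + 3*γ*δ*Q + 2*γ*δ*P + γ*δ^2 + γ^2*Q + γ^2*μ*c
        + γ^2*δ + d*U^2 + 3*d*Q*U + d*Q^2 + 3*d*P*U + 2*d*P*Q + d*P^2 + d*μ*c*U + d*μ*c*Q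
        + d*μ*c*P + 4*d*δ*U + 4*d*δ*Q + 4*d*δ*P + d*δ^2 + 2*d*γ*U + 4*d*γ*Q + 2*d*γ*P
        + 2*d*γ*μ*c + 4*d*γ*δ + d*γ^2 + 3*d^2*U + 3*d^2*Q + 3*d^2*P + d^2*μ*c + 3*d^2*δ
        + 3*d^2*γ + 2*d^3 := by positivity
    linarith
end
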